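/- Let α > 0, λ < 0, and let a, c, d be real numbers with c < 0 < a, d ≥ 0, satisfying 1/α + λ² + a·c − c² = 0. Set ρ₁ = (√(4c(2c−a)+d²)+d)/2 and ρ₂ = (√(4c(2c−a)+d²)−d)/2, and define f : ℝ³ → ℂ⁴ by f(u,v,w) = ( (λ/√(λ²+1/α))·exp(i·u/(αλ)), (1/√(α(c−a)(2c−a)))·exp(−i(λu−(c−a)v)), (1/√(α·ρ₁(ρ₁+ρ₂)))·exp(−i(λu+cv+ρ₁w)), (1/√(α·ρ₂(ρ₁+ρ₂)))·exp(−i(λu+cv−ρ₂w)) ). Then ‖f(u,v,w)‖ = 1 for every (u,v,w) ∈ ℝ³, i.e. f maps ℝ³ into the unit sphere S⁷ ⊂ ℂ⁴. -/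

import Mathlib

/-- the flat Legendrian immersion f maps ℝ³ into the unit sphere S⁷ ⊂ ℂ⁴. -/

theorem stmt_2 (α lam a c d : ℝ) (hα : 0 < α) (hlam : lam < 0)
    (hc : c < 0) (ha : 0 < a) (hd : 0 ≤ d)
    (hrel : 1/α + lam^2 + a*c - c^2 = 0)
    (ρ₁ ρ₂ : ℝ)
    (hρ₁ : ρ₁ = (Real.sqrt (4*c*(2*c - a) + d^2) + d)/2)
    (hρ₂ : ρ₂ = (Real.sqrt (4*c*(2*c - a) + d^2) - d)/2)
    (f : ℝ → ℝ → ℝ → EuclideanSpace ℂ (Fin 4))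
    (hf : ∀ u v w : ℝ, f u v w = (WithLp.equiv 2 (Fin 4 → ℂ)).symm
      ![((lam / Real.sqrt (lam^2 + 1/α) : ℝ) : ℂ)
          * Complex.exp (Complex.I * ((u/(α*lam) : ℝ) : ℂ)),
        ((1 / Real.sqrt (α*(c - a)*(2*c - a)) : ℝ) : ℂ)
          * Complex.exp (-Complex.I * ((lam*u - (c - a)*v : ℝ) : ℂ)),
        ((1 / Real.sqrt (α*ρ₁*(ρ₁ + ρ₂)) : ℝ) : ℂ)
          * Complex.exp (-Complex.I * ((lam*u + c*v + ρ₁*w : ℝ) : ℂ)),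
        ((1 / Real.sqrt (α*ρ₂*(ρ₁ + ρ₂)) : ℝ) : ℂ)
          * Complex.exp (-Complex.I * ((lam*u + c*v - ρ₂*w : ℝ) : ℂ))]) :
    ∀ u v w : ℝ, ‖f u v w‖ = 1 := by
  intro u v w
  have hα' : (0:ℝ) < 1/α := by positivity
  have hL : lam^2 + 1/α = c*(c-a) := by nlinarith [hrel]
  have hLpos : (0:ℝ) < lam^2 + 1/α := by positivity
  have hca : c - a < 0 := by linarith
  have h2ca : 2*c - a < 0 := by linarith
  have hP1 : 0 < α*(c-a)*(2*c-a) := by have := mul_pos_of_neg_of_neg hca h2ca; nlinarith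
  have hs2 : 0 < 4*c*(2*c-a) + d^2 := by nlinarith
  set s := Real.sqrt (4*c*(2*c-a) + d^2) with hs
  have hssq : s^2 = 4*c*(2*c-a) + d^2 := Real.sq_sqrt hs2.le
  have hspos : 0 < s := Real.sqrt_pos.mpr hs2
  have hsd : d < s := by nlinarith
  have hρ₁pos : 0 < ρ₁ := by rw [hρ₁]; linarith
  have hρ₂pos : 0 < ρ₂ := by rw [hρ₂]; linarith
  have hsum : ρ₁ + ρ₂ = s := by rw [hρ₁, hρ₂]; ring
  have hprod : ρ₁ * ρ₂ = c*(2*c-a) := by rw [hρ₁, hρ₂]; nlinarith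
  have e1 : ∀ x:ℝ, ‖Complex.exp (Complex.I * (x:ℂ))‖ = 1 := by
    intro x; simp [Complex.norm_exp]
  have e2 : ∀ x:ℝ, ‖Complex.exp (-Complex.I * (x:ℂ))‖ = 1 := by
    intro x; simp [Complex.norm_exp]
  rw [hf u v w, EuclideanSpace.norm_eq]
  simp only [WithLp.equiv_symm_apply, WithLp.ofLp_toLp, Fin.sum_univ_four, Matrix.cons_val_zero,
    Matrix.cons_val_one, Matrix.head_cons, Matrix.cons_val_two, Matrix.tail_cons,
    Matrix.cons_val_three, norm_mul, Complex.norm_real, e1, e2, mul_one, Real.norm_eq_abs]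
  have q0 : |lam / Real.sqrt (lam^2 + 1/α)|^2 = lam^2 / (c*(c-a)) := by
    rw [sq_abs, div_pow, Real.sq_sqrt hLpos.le, hL]
  have q1 : |1 / Real.sqrt (α*(c - a)*(2*c - a))|^2 = 1 / (α*(c-a)*(2*c-a)) := by
    rw [sq_abs, div_pow, Real.sq_sqrt hP1.le, one_pow]
  have q2 : |1 / Real.sqrt (α*ρ₁*(ρ₁ + ρ₂))|^2 = 1 / (α*ρ₁*(ρ₁+ρ₂)) := by
    rw [sq_abs, div_pow, Real.sq_sqrt (by positivity), one_pow]
  have q3 : |1 / Real.sqrt (α*ρ₂*(ρ₁ + ρ₂))|^2 = 1 / (α*ρ₂*(ρ₁+ρ₂)) := by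
    rw [sq_abs, div_pow, Real.sq_sqrt (by positivity), one_pow]
  rw [q0, q1, q2, q3, hsum]
  have hcc : (0:ℝ) < c*(c-a) := mul_pos_of_neg_of_neg hc hca
  have hcc2 : (0:ℝ) < c*(2*c-a) := mul_pos_of_neg_of_neg hc h2ca
  have hcc3 : (0:ℝ) < α*c*(2*c-a) := by have := mul_pos hα hcc2; nlinarith
  have hfinal : lam^2 / (c*(c-a)) + 1/(α*(c-a)*(2*c-a)) + 1/(α*ρ₁*s) + 1/(α*ρ₂*s) = 1 := by
    have h1 : 1/(α*ρ₁*s) + 1/(α*ρ₂*s) = 1/(α*c*(2*c-a)) := by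
      rw [div_add_div _ _ (mul_pos (mul_pos hα hρ₁pos) hspos).ne'
          (mul_pos (mul_pos hα hρ₂pos) hspos).ne',
        div_eq_div_iff (mul_pos (mul_pos (mul_pos hα hρ₁pos) hspos)
          (mul_pos (mul_pos hα hρ₂pos) hspos)).ne' hcc3.ne']
      linear_combination (α^2*s*c*(2*c-a))*hsum - (α^2*s^2)*hprod
    have h2 : 1/(α*(c-a)*(2*c-a)) + 1/(α*c*(2*c-a)) = (1/α) / (c*(c-a)) := by
      rw [div_add_div _ _ hP1.ne' hcc3.ne', div_eq_div_iff (by positivity) hcc.ne']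
      field_simp
      ring
    rw [add_assoc, h1, add_assoc, h2, ← add_div, hL, div_self hcc.ne']
  rw [hfinal, Real.sqrt_one]
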